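/- For a standard one-dimensional Brownian motion (X_t) started at x with |x| ≤ L√t, L ≥ 1, t > 0, and 0 ≤ a ≤ 1, there is an absolute constant c_0 < ∞ such that P[X_t ∈ [0,a]] ≤ c_0 · L · a · t^{-1/2} · P[X_t < a]. -/

import Mathlib

open ProbabilityTheory MeasureTheory

set_option maxHeartbeats 1000000 in
theorem stmt16 :
    ∃ c₀ : ℝ, 0 < c₀ ∧
      ∀ (L : ℝ) (t : NNReal) (x a : ℝ),
        1 ≤ L → 0 < (t : ℝ) → |x| ≤ L * Real.sqrt t → 0 ≤ a → a ≤ 1 →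
        gaussianReal x t (Set.Icc 0 a)
          ≤ ENNReal.ofReal (c₀ * L * a / Real.sqrt t) * gaussianReal x t (Set.Iio a) := by
  refine ⟨9, by norm_num, fun L t x a hL ht hx ha ha1 => ?_⟩
  have htne : t ≠ 0 := fun h => by simp [h] at ht
  have hst : 0 < Real.sqrt t := Real.sqrt_pos.mpr ht
  have hst2 : Real.sqrt t ^ 2 = (t : ℝ) := Real.sq_sqrt ht.le
  have h2t : (0 : ℝ) < 2 * (t : ℝ) := by linarith
  set f := gaussianPDFReal x t with hf
  have hfnn : ∀ y, 0 ≤ f y := gaussianPDFReal_nonneg x t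
  -- monotonicity of the density
  have hmono : ∀ y z : ℝ, (z - x) ^ 2 ≤ (y - x) ^ 2 → f y ≤ f z := by
    intro y z h
    simp only [hf, gaussianPDFReal]
    apply mul_le_mul_of_nonneg_left _ (by positivity)
    apply Real.exp_le_exp.mpr
    rw [div_le_div_iff₀ h2t h2t]
    nlinarith
  set c := min x a with hc
  set u := (x - c) / Real.sqrt t with hu
  have hcx : c ≤ x := min_le_left x a
  have hca : c ≤ a := min_le_right x a
  have hu0 : 0 ≤ u := div_nonneg (by linarith) hst.le
  have huL : u ≤ L := by
    rw [hu, div_le_iff₀ hst]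
    rcases le_total x a with h | h
    · rw [hc, min_eq_left h]
      have : (0:ℝ) < L * Real.sqrt t := by positivity
      linarith
    · rw [hc, min_eq_right h]
      have hxle : x ≤ |x| := le_abs_self x
      linarith
  set δ := Real.sqrt t / (u + 1) with hδdef
  have hδ : 0 < δ := div_pos hst (by linarith)
  have hδeq : δ * (u + 1) = Real.sqrt t := by
    rw [hδdef]; field_simp
  set b := c - δ with hb
  have hxc : x - c = u * Real.sqrt t := by
    rw [hu]; field_simp
  -- I1 : integral over Icc 0 a ≤ a * f c
  have I1 : ∫ y in Set.Icc 0 a, f y ≤ a * f c := by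
    have h1 : ∫ y in Set.Icc 0 a, f y ≤ ∫ _y in Set.Icc 0 a, f c := by
      apply setIntegral_mono_on (integrable_gaussianPDFReal x t).integrableOn
        (integrableOn_const (by rw [Real.volume_Icc]; exact ENNReal.ofReal_ne_top))
        measurableSet_Icc
      intro y hy
      apply hmono
      rcases le_total x a with h | h
      · rw [hc, min_eq_left h]
        simp
        positivity
      · rw [hc, min_eq_right h]
        have h1 := hy.1; have h2 := hy.2
        nlinarith
    calc ∫ y in Set.Icc 0 a, f y ≤ ∫ _y in Set.Icc 0 a, f c := h1
      _ = a * f c := by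
          rw [setIntegral_const, Real.volume_real_Icc_of_le ha, smul_eq_mul]
          ring
  -- I2 : f c ≤ exp (3/2) * f b
  have key : (b - x) ^ 2 - (c - x) ^ 2 ≤ 3 * (t : ℝ) := by
    have hb' : (b - x) ^ 2 - (c - x) ^ 2 = δ ^ 2 + 2 * δ * (x - c) := by
      rw [hb]; ring
    rw [hb', hxc]
    nlinarith [sq_nonneg u, hδ.le, hδeq, hst2, mul_pos hδ hδ, sq_nonneg (u * δ)]
  have I2 : f c ≤ Real.exp (3 / 2) * f b := by
    have hexp : -(c - x) ^ 2 / (2 * (t:ℝ)) ≤ 3 / 2 + -(b - x) ^ 2 / (2 * (t:ℝ)) := by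
      have h32 : (3:ℝ) / 2 = 3 * (t:ℝ) / (2 * (t:ℝ)) := by
        field_simp
      rw [h32, ← add_div, div_le_div_iff₀ h2t h2t]
      nlinarith [key, h2t]
    simp only [hf, gaussianPDFReal]
    rw [mul_left_comm, ← Real.exp_add]
    exact mul_le_mul_of_nonneg_left (Real.exp_le_exp.mpr hexp) (by positivity)
  -- I3 : δ * f b ≤ integral over Iio a
  have I3 : δ * f b ≤ ∫ y in Set.Iio a, f y := by
    have hsub : Set.Ico b c ⊆ Set.Iio a := fun y hy => lt_of_lt_of_le hy.2 hca
    have h1 : ∫ _y in Set.Ico b c, f b ≤ ∫ y in Set.Ico b c, f y := by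
      apply setIntegral_mono_on
        (integrableOn_const (by rw [Real.volume_Ico]; exact ENNReal.ofReal_ne_top))
        (integrable_gaussianPDFReal x t).integrableOn
        measurableSet_Ico
      intro y hy
      apply hmono
      have h1 := hy.1; have h2 := hy.2
      have hby : b ≤ c := by rw [hb]; linarith
      nlinarith
    have h2 : ∫ y in Set.Ico b c, f y ≤ ∫ y in Set.Iio a, f y :=
      setIntegral_mono_set (integrable_gaussianPDFReal x t).integrableOn
        (ae_of_all _ hfnn) (HasSubset.Subset.eventuallyLE hsub)
    calc δ * f b = ∫ _y in Set.Ico b c, f b := by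
          rw [setIntegral_const, Real.volume_real_Ico_of_le (by rw [hb]; linarith), smul_eq_mul]
          rw [hb]; ring
      _ ≤ ∫ y in Set.Ico b c, f y := h1
      _ ≤ _ := h2
  -- exp(3/2) ≤ 4.5
  have he : Real.exp (3 / 2) ≤ 4.5 := by
    have h1 : Real.exp 1 < 2.7182818286 := Real.exp_one_lt_d9
    have h3 : Real.exp 3 = Real.exp 1 ^ 3 := by
      rw [← Real.exp_nat_mul]; norm_num
    have hsq : Real.exp (3 / 2) ^ 2 = Real.exp 3 := by
      rw [sq, ← Real.exp_add]; norm_num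
    have h13 : Real.exp 1 ^ 3 < 2.7182818286 ^ 3 :=
      pow_lt_pow_left₀ h1 (Real.exp_pos 1).le (by norm_num)
    have h20 : Real.exp (3 / 2) ^ 2 < 20.25 := by
      rw [hsq, h3]; nlinarith
    nlinarith [Real.exp_pos (3/2 : ℝ), h20]
  have hexp9 : Real.exp (3 / 2) * (u + 1) ≤ 9 * L := by
    have hp : 0 ≤ (4.5 - Real.exp (3 / 2)) * (u + 1) :=
      mul_nonneg (by linarith) (by linarith)
    nlinarith [hp]
  -- combine
  rw [gaussianReal_apply_eq_integral x htne, gaussianReal_apply_eq_integral x htne,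
    ← ENNReal.ofReal_mul (by positivity)]
  apply ENNReal.ofReal_le_ofReal
  have hC : a * (Real.exp (3 / 2) * f b) ≤ 9 * L * a / Real.sqrt t * (δ * f b) := by
    rw [div_mul_eq_mul_div, le_div_iff₀ hst, ← hδeq]
    nlinarith [mul_nonneg (mul_nonneg ha (hfnn b)) hδ.le]
  calc ∫ y in Set.Icc 0 a, f y ≤ a * f c := I1
    _ ≤ a * (Real.exp (3 / 2) * f b) := mul_le_mul_of_nonneg_left I2 ha
    _ ≤ 9 * L * a / Real.sqrt t * (δ * f b) := hC
    _ ≤ 9 * L * a / Real.sqrt t * ∫ y in Set.Iio a, f y :=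
        mul_le_mul_of_nonneg_left I3 (by positivity)
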